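/- In U_q(g), for i ≠ j one has Σ_{r=0}^{1-A_ij} (-1)^r [1-A_ij choose r]_i (K_i^{-1} + F_i(q_i - q_i^{-1}))^{1-A_ij-r} F_j (K_i^{-1} + F_i(q_i - q_i^{-1}))^{r} = 0. -/

import Mathlib

open FreeAlgebra
open scoped TensorProduct

noncomputable section

/-- The field `𝕂(q)` of rational functions in the indeterminate `q` over `𝕂`. -/
abbrev Kq (K : Type) [Field K] : Type := RatFunc K

/-- The indeterminate `q` viewed as an element of `𝕂(q)`. -/
def qv (K : Type) [Field K] : Kq K := RatFunc.X

/-- `q_i = q^{d_i}`, given the exponent `di = d_i`. -/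
def qi (K : Type) [Field K] (di : ℕ) : Kq K := qv K ^ di

/-- The quantum integer `[m]_i = (q_i^m - q_i^{-m})/(q_i - q_i⁻¹)`. -/
def qnum (K : Type) [Field K] (di : ℕ) (m : ℤ) : Kq K :=
  (qi K di ^ m - qi K di ^ (-m)) / (qi K di - (qi K di)⁻¹)

/-- The quantum factorial `[m]_i! = [m]_i [m-1]_i ⋯ [1]_i`, with `[0]_i! = 1`. -/
def qfac (K : Type) [Field K] (di : ℕ) : ℕ → Kq K
  | 0 => 1
  | m + 1 => qnum K di (m + 1) * qfac K di m

/-- The Gaussian binomial coefficient `[m choose r]_i = [m]_i!/([r]_i![m-r]_i!)`. -/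
def qbin (K : Type) [Field K] (di m r : ℕ) : Kq K :=
  qfac K di m / (qfac K di r * qfac K di (m - r))

/-- Chevalley generators `E_i, F_i, K_i, K_i⁻¹` of `U_q(g)`. -/
inductive CGen (n : ℕ) : Type
  | E : Fin n → CGen n
  | F : Fin n → CGen n
  | K : Fin n → CGen n
  | Kinv : Fin n → CGen n

/-- The defining relations (R1)–(R7) of `U_q(g)` in the Chevalley presentation. -/
inductive CRel (K : Type) [Field K] {n : ℕ} (A : Matrix (Fin n) (Fin n) ℤ) (d : Fin n → ℕ) :
    FreeAlgebra (Kq K) (CGen n) → FreeAlgebra (Kq K) (CGen n) → Prop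
  | R1a (i : Fin n) : CRel K A d (ι (Kq K) (CGen.K i) * ι (Kq K) (CGen.Kinv i)) 1
  | R1b (i : Fin n) : CRel K A d (ι (Kq K) (CGen.Kinv i) * ι (Kq K) (CGen.K i)) 1
  | R2 (i j : Fin n) : CRel K A d (ι (Kq K) (CGen.K i) * ι (Kq K) (CGen.K j))
      (ι (Kq K) (CGen.K j) * ι (Kq K) (CGen.K i))
  | R3 (i j : Fin n) : CRel K A d
      (ι (Kq K) (CGen.K i) * ι (Kq K) (CGen.E j) * ι (Kq K) (CGen.Kinv i))
      (qi K (d i) ^ (A i j) • ι (Kq K) (CGen.E j))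
  | R4 (i j : Fin n) : CRel K A d
      (ι (Kq K) (CGen.K i) * ι (Kq K) (CGen.F j) * ι (Kq K) (CGen.Kinv i))
      (qi K (d i) ^ (-(A i j)) • ι (Kq K) (CGen.F j))
  | R5 (i j : Fin n) : CRel K A d
      (ι (Kq K) (CGen.E i) * ι (Kq K) (CGen.F j) - ι (Kq K) (CGen.F j) * ι (Kq K) (CGen.E i))
      (if i = j then (qi K (d i) - (qi K (d i))⁻¹)⁻¹ •
        (ι (Kq K) (CGen.K i) - ι (Kq K) (CGen.Kinv i)) else 0)
  | R6 (i j : Fin n) (hij : i ≠ j) : CRel K A d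
      (∑ r ∈ Finset.range ((1 - A i j).toNat + 1),
        ((-1 : Kq K) ^ r * qbin K (d i) (1 - A i j).toNat r) •
          (ι (Kq K) (CGen.E i) ^ ((1 - A i j).toNat - r) * ι (Kq K) (CGen.E j) *
            ι (Kq K) (CGen.E i) ^ r)) 0
  | R7 (i j : Fin n) (hij : i ≠ j) : CRel K A d
      (∑ r ∈ Finset.range ((1 - A i j).toNat + 1),
        ((-1 : Kq K) ^ r * qbin K (d i) (1 - A i j).toNat r) •
          (ι (Kq K) (CGen.F i) ^ ((1 - A i j).toNat - r) * ι (Kq K) (CGen.F j) *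
            ι (Kq K) (CGen.F i) ^ r)) 0

/-- The quantum group `U_q(g)` presented by generators and relations (R1)–(R7). -/
abbrev Uqg (K : Type) [Field K] {n : ℕ} (A : Matrix (Fin n) (Fin n) ℤ) (d : Fin n → ℕ) :=
  RingQuot (CRel K A d)

variable (K : Type) [Field K] {n : ℕ} (A : Matrix (Fin n) (Fin n) ℤ) (d : Fin n → ℕ)

def genE (i : Fin n) : Uqg K A d := RingQuot.mkAlgHom (Kq K) (CRel K A d) (ι (Kq K) (CGen.E i))
def genF (i : Fin n) : Uqg K A d := RingQuot.mkAlgHom (Kq K) (CRel K A d) (ι (Kq K) (CGen.F i))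
def genK (i : Fin n) : Uqg K A d := RingQuot.mkAlgHom (Kq K) (CRel K A d) (ι (Kq K) (CGen.K i))
def genKinv (i : Fin n) : Uqg K A d :=
  RingQuot.mkAlgHom (Kq K) (CRel K A d) (ι (Kq K) (CGen.Kinv i))

/-- Equitable generators `X_i, X_i⁻¹, Y_i, Z_i`. -/
inductive EGen (n : ℕ) : Type
  | X : Fin n → EGen n
  | Xinv : Fin n → EGen n
  | Y : Fin n → EGen n
  | Z : Fin n → EGen n

/-- The defining relations (E1)–(E8) of the equitable presentation. -/
inductive ERel (K : Type) [Field K] {n : ℕ} (A : Matrix (Fin n) (Fin n) ℤ) (d : Fin n → ℕ) :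
    FreeAlgebra (Kq K) (EGen n) → FreeAlgebra (Kq K) (EGen n) → Prop
  | E1a (i : Fin n) : ERel K A d (ι (Kq K) (EGen.X i) * ι (Kq K) (EGen.Xinv i)) 1
  | E1b (i : Fin n) : ERel K A d (ι (Kq K) (EGen.Xinv i) * ι (Kq K) (EGen.X i)) 1
  | E2 (i j : Fin n) : ERel K A d (ι (Kq K) (EGen.X i) * ι (Kq K) (EGen.X j))
      (ι (Kq K) (EGen.X j) * ι (Kq K) (EGen.X i))
  | E3 (i j : Fin n) : ERel K A d
      (ι (Kq K) (EGen.Y i) * ι (Kq K) (EGen.X j) -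
        qi K (d i) ^ (A i j) • (ι (Kq K) (EGen.X j) * ι (Kq K) (EGen.Y i)))
      ((1 - qi K (d i) ^ (A i j)) • (ι (Kq K) (EGen.Xinv i) * ι (Kq K) (EGen.X j)))
  | E4 (i j : Fin n) : ERel K A d
      (ι (Kq K) (EGen.X i) * ι (Kq K) (EGen.Z j) -
        qi K (d i) ^ (A i j) • (ι (Kq K) (EGen.Z j) * ι (Kq K) (EGen.X i)))
      ((1 - qi K (d i) ^ (A i j)) • (ι (Kq K) (EGen.X i) * ι (Kq K) (EGen.Xinv j)))
  | E5 (i : Fin n) : ERel K A d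
      (ι (Kq K) (EGen.Z i) * ι (Kq K) (EGen.Y i) -
        (qi K (d i) ^ 2) • (ι (Kq K) (EGen.Y i) * ι (Kq K) (EGen.Z i)))
      ((1 - qi K (d i) ^ 2) • 1)
  | E6 (i j : Fin n) (hij : i ≠ j) : ERel K A d
      (ι (Kq K) (EGen.Z i) * ι (Kq K) (EGen.Y j) -
        qi K (d i) ^ (A i j) • (ι (Kq K) (EGen.Y j) * ι (Kq K) (EGen.Z i)))
      ((1 - qi K (d i) ^ (A i j)) • (ι (Kq K) (EGen.Xinv i) * ι (Kq K) (EGen.Xinv j)))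
  | E7 (i j : Fin n) (hij : i ≠ j) : ERel K A d
      (∑ r ∈ Finset.range ((1 - A i j).toNat + 1),
        ((-1 : Kq K) ^ r * qbin K (d i) (1 - A i j).toNat r) •
          (ι (Kq K) (EGen.Y i) ^ ((1 - A i j).toNat - r) * ι (Kq K) (EGen.Y j) *
            ι (Kq K) (EGen.Y i) ^ r))
      ((∏ s ∈ Finset.range ((-(A i j)).toNat + 1), (1 - qi K (d i) ^ (A i j + 2 * (s : ℤ)))) •
        (ι (Kq K) (EGen.Xinv i) ^ (1 - A i j).toNat * ι (Kq K) (EGen.Xinv j)))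
  | E8 (i j : Fin n) (hij : i ≠ j) : ERel K A d
      (∑ r ∈ Finset.range ((1 - A i j).toNat + 1),
        ((-1 : Kq K) ^ r * qbin K (d i) (1 - A i j).toNat r) •
          (ι (Kq K) (EGen.Z i) ^ ((1 - A i j).toNat - r) * ι (Kq K) (EGen.Z j) *
            ι (Kq K) (EGen.Z i) ^ r))
      ((∏ s ∈ Finset.range ((-(A i j)).toNat + 1), (1 - qi K (d i) ^ (A i j + 2 * (s : ℤ)))) •
        (ι (Kq K) (EGen.Xinv i) ^ (1 - A i j).toNat * ι (Kq K) (EGen.Xinv j)))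

/-- The equitable algebra `U` presented by generators and relations (E1)–(E8). -/
abbrev Ueqg (K : Type) [Field K] {n : ℕ} (A : Matrix (Fin n) (Fin n) ℤ) (d : Fin n → ℕ) :=
  RingQuot (ERel K A d)

def genX (i : Fin n) : Ueqg K A d := RingQuot.mkAlgHom (Kq K) (ERel K A d) (ι (Kq K) (EGen.X i))
def genXinv (i : Fin n) : Ueqg K A d :=
  RingQuot.mkAlgHom (Kq K) (ERel K A d) (ι (Kq K) (EGen.Xinv i))
def genY (i : Fin n) : Ueqg K A d := RingQuot.mkAlgHom (Kq K) (ERel K A d) (ι (Kq K) (EGen.Y i))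
def genZ (i : Fin n) : Ueqg K A d := RingQuot.mkAlgHom (Kq K) (ERel K A d) (ι (Kq K) (EGen.Z i))

/-- `A` is a symmetrizable generalized Cartan matrix with symmetrizing positive,
relatively prime integers `d_i`, and `n ≥ 1`. -/
def IsSymmetrizableGCM {n : ℕ} (A : Matrix (Fin n) (Fin n) ℤ) (d : Fin n → ℕ) : Prop :=
  0 < n ∧ (∀ i, A i i = 2) ∧ (∀ i j, i ≠ j → A i j ≤ 0) ∧
    (∀ i, 0 < d i) ∧ Finset.univ.gcd d = 1 ∧
    (∀ i j, (d i : ℤ) * A i j = (d j : ℤ) * A j i)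

end


section ScalarLemmas
variable (K : Type) [Field K]

lemma qv_ne_zero : qv K ≠ 0 := RatFunc.X_ne_zero

lemma qi_ne_zero (di : ℕ) : qi K di ≠ 0 := pow_ne_zero _ (qv_ne_zero K)

lemma qv_pow_ne_one {k : ℕ} (hk : k ≠ 0) : qv K ^ k ≠ 1 := by
  intro h
  have hX : (Polynomial.X : Polynomial K) ^ k = 1 := by
    apply RatFunc.algebraMap_injective K
    simpa [map_pow, RatFunc.algebraMap_X, qv] using h
  have := congrArg Polynomial.natDegree hX
  simp [Polynomial.natDegree_X_pow] at this
  exact hk this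

lemma qi_sub_inv_ne_zero (di : ℕ) (hdi : 0 < di) :
    qi K di - (qi K di)⁻¹ ≠ 0 := by
  have ht : qi K di ≠ 0 := qi_ne_zero K di
  intro h
  have h2 : qi K di * qi K di = 1 := by
    have : qi K di = (qi K di)⁻¹ := sub_eq_zero.mp h
    calc qi K di * qi K di = qi K di * (qi K di)⁻¹ := by rw [← this]
    _ = 1 := mul_inv_cancel₀ ht
  have : qv K ^ (2 * di) = 1 := by
    rw [two_mul, pow_add]; exact_mod_cast h2
  exact qv_pow_ne_one K (by omega) this

lemma qnum_natCast (di M : ℕ) :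
    qnum K di (M : ℤ) = ((qi K di) ^ M - ((qi K di)⁻¹) ^ M) / (qi K di - (qi K di)⁻¹) := by
  rw [qnum, zpow_natCast, zpow_neg, zpow_natCast, inv_pow]

lemma qnum_ne_zero (di M : ℕ) (hdi : 0 < di) (hM : 0 < M) :
    qnum K di (M : ℤ) ≠ 0 := by
  have ht : qi K di ≠ 0 := qi_ne_zero K di
  rw [qnum_natCast]
  apply div_ne_zero _ (qi_sub_inv_ne_zero K di hdi)
  intro h
  have h2 : qi K di ^ M * qi K di ^ M = 1 := by
    have h1 : qi K di ^ M = ((qi K di)⁻¹) ^ M := sub_eq_zero.mp h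
    calc qi K di ^ M * qi K di ^ M = qi K di ^ M * ((qi K di)⁻¹)^M := by rw [← h1]
    _ = 1 := by rw [← mul_pow, mul_inv_cancel₀ ht, one_pow]
  have : qv K ^ (2 * (M * di)) = 1 := by
    rw [two_mul, pow_add, mul_comm M di, pow_mul]
    exact_mod_cast h2
  exact qv_pow_ne_one K (by positivity) this

lemma qfac_ne_zero (di m : ℕ) (hdi : 0 < di) : qfac K di m ≠ 0 := by
  induction m with
  | zero => simp [qfac]
  | succ m ih =>
    rw [qfac]
    exact mul_ne_zero (by exact_mod_cast qnum_ne_zero K di (m+1) hdi (by omega)) ih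

lemma qbin_zero (di m : ℕ) (hdi : 0 < di) : qbin K di m 0 = 1 := by
  rw [qbin]
  simp [qfac, div_self (qfac_ne_zero K di m hdi)]

lemma qbin_self (di m : ℕ) (hdi : 0 < di) : qbin K di m m = 1 := by
  rw [qbin]
  simp [qfac, div_self (qfac_ne_zero K di m hdi)]

lemma qnum_eq_of_arg (di : ℕ) {a b : ℤ} (h : a = b) : qnum K di a = qnum K di b := by rw [h]

lemma qfac_succ (di m : ℕ) : qfac K di (m + 1) = qnum K di ((m : ℤ) + 1) * qfac K di m := rfl

lemma qnum_ne_zero' (di m : ℕ) (hdi : 0 < di) : qnum K di ((m : ℤ) + 1) ≠ 0 := by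
  have h : ((m : ℤ) + 1) = ((m + 1 : ℕ) : ℤ) := by push_cast; ring
  rw [h]
  exact qnum_ne_zero K di (m + 1) hdi (by omega)

lemma qnum_split (di u k : ℕ) :
    qnum K di ((u : ℤ) + (k : ℤ) + 2) =
      ((qi K di)⁻¹) ^ (u + 1) * qnum K di ((k : ℤ) + 1) +
        (qi K di) ^ (k + 1) * qnum K di ((u : ℤ) + 1) := by
  have h1 : ((u : ℤ) + (k : ℤ) + 2) = ((u + k + 2 : ℕ) : ℤ) := by push_cast; ring
  have h2 : ((k : ℤ) + 1) = ((k + 1 : ℕ) : ℤ) := by push_cast; ring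
  have h3 : ((u : ℤ) + 1) = ((u + 1 : ℕ) : ℤ) := by push_cast; ring
  rw [h1, h2, h3, qnum_natCast, qnum_natCast, qnum_natCast, ← mul_div_assoc, ← mul_div_assoc,
    ← add_div]
  congr 1
  ring

lemma pascal (di : ℕ) (hdi : 0 < di) (m r : ℕ) (h1 : 1 ≤ r) (h2 : r ≤ m) :
    qbin K di (m + 1) r =
      ((qi K di)⁻¹) ^ r * qbin K di m r + (qi K di) ^ (m + 1 - r) * qbin K di m (r - 1) := by
  obtain ⟨u, rfl⟩ : ∃ u, r = u + 1 := ⟨r - 1, by omega⟩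
  obtain ⟨k, rfl⟩ : ∃ k, m = u + 1 + k := ⟨m - (u + 1), by omega⟩
  have e1 : u + 1 + k + 1 - (u + 1) = k + 1 := by omega
  have e2 : u + 1 + k - (u + 1) = k := by omega
  have e3 : u + 1 + k - u = k + 1 := by omega
  have e4 : u + 1 - 1 = u := by omega
  rw [qbin, qbin, qbin, e1, e2, e4, e3]
  have hfk := qfac_ne_zero K di k hdi
  have hfu := qfac_ne_zero K di u hdi
  have hfm := qfac_ne_zero K di (u + 1 + k) hdi
  have hnu : qnum K di ((u : ℤ) + 1) ≠ 0 := qnum_ne_zero' K di u hdi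
  have hnk : qnum K di ((k : ℤ) + 1) ≠ 0 := qnum_ne_zero' K di k hdi
  have ht : qi K di ≠ 0 := qi_ne_zero K di
  have hq1 : qfac K di (u + 1 + k + 1)
      = qnum K di ((u : ℤ) + (k : ℤ) + 2) * qfac K di (u + 1 + k) := by
    rw [qfac_succ]
    rw [qnum_eq_of_arg K di
      (show ((u + 1 + k : ℕ) : ℤ) + 1 = (u : ℤ) + (k : ℤ) + 2 by push_cast; ring)]
  rw [hq1, qfac_succ K di u, qfac_succ K di k, qnum_split K di u k]
  set a := qnum K di ((u : ℤ) + 1) with ha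
  set b := qnum K di ((k : ℤ) + 1) with hb
  set fU := qfac K di u with hfU
  set fK := qfac K di k with hfK
  set fM := qfac K di (u + 1 + k) with hfM
  set t := qi K di with htq
  have hD1 : a * fU * fK ≠ 0 := by simp [hnu, hfu, hfk]
  have hD2 : fU * (b * fK) ≠ 0 := by simp [hnk, hfu, hfk]
  have hD : a * fU * (b * fK) ≠ 0 := by simp [hnu, hnk, hfu, hfk]
  have hDD : a * fU * fK * (fU * (b * fK)) ≠ 0 := mul_ne_zero hD1 hD2
  rw [← mul_div_assoc, ← mul_div_assoc, div_add_div _ _ hD1 hD2, div_eq_div_iff hD hDD]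
  ring

end ScalarLemmas

/-- Truncated coefficient `(-1)^r q_i^{r(b+m-1)} [m choose r]_i`, zero for `r > m`. -/
noncomputable def Cc (K : Type) [Field K] (di : ℕ) (b : ℤ) (m r : ℕ) : Kq K :=
  if r ≤ m then (-1 : Kq K) ^ r * (qi K di) ^ ((r : ℤ) * (b + m - 1)) * qbin K di m r else 0

section CcLemmas
variable (K : Type) [Field K]

lemma Cc_of_gt (di : ℕ) (b : ℤ) {m r : ℕ} (h : m < r) : Cc K di b m r = 0 :=
  if_neg (by omega)

lemma zpow_mul_zpow {t : Kq K} (ht : t ≠ 0) {e1 e2 e3 : ℤ} (h : e1 + e2 = e3) :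
    t ^ e1 * t ^ e2 = t ^ e3 := by rw [← zpow_add₀ ht, h]

lemma Cc_of_le (di : ℕ) (b : ℤ) {m r : ℕ} (h : r ≤ m) :
    Cc K di b m r = (-1 : Kq K) ^ r * (qi K di) ^ ((r : ℤ) * (b + m - 1)) * qbin K di m r :=
  if_pos h

lemma Cc_rec (di : ℕ) (hdi : 0 < di) (b : ℤ) (m r : ℕ) (hr : r ≤ m + 1) :
    Cc K di b (m + 1) r =
      Cc K di b m r -
        (if r = 0 then 0 else (qi K di) ^ (b + 2 * m) * Cc K di b m (r - 1)) := by
  set t := qi K di with htq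
  have ht : t ≠ 0 := qi_ne_zero K di
  rcases Nat.eq_zero_or_pos r with h0 | h0
  · subst h0
    simp only [if_pos rfl, sub_zero, Cc_of_le K di b (Nat.zero_le _)]
    rw [qbin_zero K di _ hdi, qbin_zero K di _ hdi]
    simp
  obtain ⟨u, rfl⟩ : ∃ u, r = u + 1 := ⟨r - 1, by omega⟩
  rw [if_neg (Nat.succ_ne_zero u), Nat.add_sub_cancel]
  rcases Nat.lt_or_ge u m with hum | hum
  · -- middle case : 1 ≤ u+1 ≤ m
    rw [Cc_of_le K di b (show u + 1 ≤ m + 1 by omega), Cc_of_le K di b (show u + 1 ≤ m by omega),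
      Cc_of_le K di b (show u ≤ m by omega)]
    rw [pascal K di hdi m (u + 1) (by omega) (by omega)]
    have hp1 : (t⁻¹) ^ (u + 1) = t ^ (-((u : ℤ) + 1)) := by
      rw [inv_pow, ← zpow_natCast, ← zpow_neg]
      norm_num
    have hp2 : t ^ (m + 1 - (u + 1)) = t ^ ((m : ℤ) - u) := by
      rw [← zpow_natCast]
      congr 1
      omega
    rw [hp1, hp2]
    have hc1 : t ^ (((u + 1 : ℕ) : ℤ) * (b + ((m + 1 : ℕ) : ℤ) - 1)) * t ^ (-((u : ℤ) + 1))
        = t ^ (((u + 1 : ℕ) : ℤ) * (b + (m : ℤ) - 1)) := by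
      apply zpow_mul_zpow K ht
      push_cast
      ring
    have hc2 : t ^ (((u + 1 : ℕ) : ℤ) * (b + ((m + 1 : ℕ) : ℤ) - 1)) * t ^ ((m : ℤ) - u)
        = t ^ (b + 2 * (m : ℤ)) * t ^ (((u : ℕ) : ℤ) * (b + (m : ℤ) - 1)) := by
      rw [zpow_mul_zpow K ht rfl, zpow_mul_zpow K ht rfl]
      congr 1
      push_cast
      ring
    have hs : ((-1 : Kq K)) ^ (u + 1) = -((-1 : Kq K)) ^ u := by
      rw [pow_succ]; ring
    push_cast at hc1 hc2 ⊢
    calc (-1 : Kq K) ^ (u + 1) * t ^ (((u : ℤ) + 1) * (b + ((m : ℤ) + 1) - 1)) *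
          (t ^ (-((u : ℤ) + 1)) * qbin K di m (u + 1) + t ^ ((m : ℤ) - u) * qbin K di m u)
        = (-1 : Kq K) ^ (u + 1) *
            (t ^ (((u : ℤ) + 1) * (b + ((m : ℤ) + 1) - 1)) * t ^ (-((u : ℤ) + 1))) *
              qbin K di m (u + 1) +
            (-1 : Kq K) ^ (u + 1) *
              (t ^ (((u : ℤ) + 1) * (b + ((m : ℤ) + 1) - 1)) * t ^ ((m : ℤ) - u)) *
                qbin K di m u := by ring
      _ = _ := by rw [hc1, hc2, hs]; ring
  · -- top case : r = m + 1
    have hu : u = m := by omega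
    subst hu
    rw [Cc_of_le K di b (le_refl (u + 1)), Cc_of_le K di b (le_refl u),
      Cc_of_gt K di b (show u < u + 1 by omega), zero_sub,
      qbin_self K di (u + 1) hdi, qbin_self K di u hdi]
    have hs : ((-1 : Kq K)) ^ (u + 1) = -((-1 : Kq K)) ^ u := by
      rw [pow_succ]; ring
    have hc : t ^ (((u + 1 : ℕ) : ℤ) * (b + ((u + 1 : ℕ) : ℤ) - 1))
        = t ^ (b + 2 * (u : ℤ)) * t ^ (((u : ℕ) : ℤ) * (b + (u : ℤ) - 1)) := by
      rw [zpow_mul_zpow K ht rfl]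
      congr 1
      push_cast
      ring
    push_cast at hc ⊢
    rw [hs, hc]
    ring

end CcLemmas

section Core
variable (K : Type) [Field K] {R : Type} [Ring R] [Algebra (Kq K) R]

/-- Iterated twisted commutator `S_{d+1} = x S_d - t^{b+2d} S_d x`, `S_0 = G`. -/
noncomputable def Sx (K : Type) [Field K] {R : Type} [Ring R] [Algebra (Kq K) R]
    (t : Kq K) (b : ℤ) (x G : R) : ℕ → R
  | 0 => G
  | (dd + 1) => x * Sx K t b x G dd - (t ^ (b + 2 * (dd : ℤ))) • (Sx K t b x G dd * x)

lemma Sx_eq (di : ℕ) (hdi : 0 < di) (b : ℤ) (x G : R) (m : ℕ) :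
    Sx K (qi K di) b x G m
      = ∑ r ∈ Finset.range (m + 1), Cc K di b m r • (x ^ (m - r) * G * x ^ r) := by
  set t := qi K di with htq
  induction m with
  | zero =>
    have h0 : Cc K di b 0 0 = 1 := by
      rw [Cc_of_le K di b (le_refl 0), qbin_zero K di 0 hdi]
      simp
    simp [Sx, h0]
  | succ m ih =>
    have key : ∀ r ∈ Finset.range (m + 2),
        Cc K di b (m + 1) r • (x ^ (m + 1 - r) * G * x ^ r)
          = Cc K di b m r • (x ^ (m + 1 - r) * G * x ^ r)
            - (if r = 0 then (0 : R) else
                (t ^ (b + 2 * (m : ℤ)) * Cc K di b m (r - 1)) •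
                  (x ^ (m + 1 - r) * G * x ^ r)) := by
      intro r hr
      rw [Finset.mem_range] at hr
      rw [Cc_rec K di hdi b m r (by omega), sub_smul]
      congr 1
      rcases Nat.eq_zero_or_pos r with h0 | h0
      · simp [h0]
      · rw [if_neg (by omega), if_neg (by omega)]
    have hA : ∑ r ∈ Finset.range (m + 2), Cc K di b m r • (x ^ (m + 1 - r) * G * x ^ r)
        = x * ∑ r ∈ Finset.range (m + 1), Cc K di b m r • (x ^ (m - r) * G * x ^ r) := by
      rw [Finset.sum_range_succ, Cc_of_gt K di b (show m < m + 1 by omega), zero_smul,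
        add_zero, Finset.mul_sum]
      refine Finset.sum_congr rfl fun r hr => ?_
      rw [Finset.mem_range] at hr
      rw [mul_smul_comm]
      congr 1
      simp only [show m + 1 - r = (m - r) + 1 by omega, pow_succ', mul_assoc]
    have hB : ∑ r ∈ Finset.range (m + 2),
          (if r = 0 then (0 : R) else
            (t ^ (b + 2 * (m : ℤ)) * Cc K di b m (r - 1)) • (x ^ (m + 1 - r) * G * x ^ r))
        = t ^ (b + 2 * (m : ℤ)) •
            ((∑ r ∈ Finset.range (m + 1), Cc K di b m r • (x ^ (m - r) * G * x ^ r)) * x) := by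
      rw [Finset.sum_range_succ', if_pos rfl, add_zero, Finset.sum_mul, Finset.smul_sum]
      refine Finset.sum_congr rfl fun r hr => ?_
      rw [if_neg (Nat.succ_ne_zero r), Nat.add_sub_cancel,
        show m + 1 - (r + 1) = m - r by omega, smul_mul_assoc, smul_smul]
      congr 1
      simp only [pow_succ, mul_assoc]
    rw [show Sx K t b x G (m + 1)
        = x * Sx K t b x G m - (t ^ (b + 2 * (m : ℤ))) • (Sx K t b x G m * x) from rfl, ih,
      Finset.sum_congr rfl key, Finset.sum_sub_distrib, hA, hB]

lemma L_Sx (t : Kq K) (ht : t ≠ 0) (b c : ℤ) (L x G : R)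
    (hx : L * x = t ^ (2 : ℤ) • (x * L)) (hG : L * G = t ^ c • (G * L)) (dd : ℕ) :
    L * Sx K t b x G dd = t ^ (c + 2 * (dd : ℤ)) • (Sx K t b x G dd * L) := by
  induction dd with
  | zero =>
    simpa [Sx] using hG
  | succ dd ih =>
    rw [show Sx K t b x G (dd + 1)
        = x * Sx K t b x G dd - (t ^ (b + 2 * (dd : ℤ))) • (Sx K t b x G dd * x) from rfl]
    set S := Sx K t b x G dd with hS
    have h1 : L * (x * S) = (t ^ (2 : ℤ) * t ^ (c + 2 * (dd : ℤ))) • (x * S * L) := by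
      rw [← mul_assoc, hx, smul_mul_assoc, mul_assoc, ih, mul_smul_comm, smul_smul,
        ← mul_assoc]
    have h2 : L * (S * x) = (t ^ (c + 2 * (dd : ℤ)) * t ^ (2 : ℤ)) • (S * x * L) := by
      rw [← mul_assoc, ih, smul_mul_assoc, mul_assoc, hx, mul_smul_comm, smul_smul,
        ← mul_assoc]
    rw [mul_sub, h1, mul_smul_comm, h2, smul_smul, sub_mul, smul_sub, smul_mul_assoc,
      smul_smul]
    have e1 : t ^ (2 : ℤ) * t ^ (c + 2 * (dd : ℤ)) = t ^ (c + 2 * ((dd : ℕ) + 1 : ℕ)) := by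
      apply zpow_mul_zpow K ht
      push_cast
      ring
    have e2 : t ^ (b + 2 * (dd : ℤ)) * (t ^ (c + 2 * (dd : ℤ)) * t ^ (2 : ℤ))
        = t ^ (c + 2 * ((dd : ℕ) + 1 : ℕ)) * t ^ (b + 2 * (dd : ℤ)) := by
      rw [zpow_mul_zpow K ht rfl, zpow_mul_zpow K ht rfl, zpow_mul_zpow K ht rfl]
      congr 1
      push_cast
      ring
    rw [e1, e2]

lemma Sx_LplusV (di : ℕ) (hdi : 0 < di) (b : ℤ) (L v G : R)
    (hv : L * v = (qi K di) ^ (2 : ℤ) • (v * L)) (hG : L * G = (qi K di) ^ b • (G * L))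
    (dd : ℕ) :
    Sx K (qi K di) b (L + v) G dd = Sx K (qi K di) b v G dd := by
  set t := qi K di with htq
  have ht : t ≠ 0 := qi_ne_zero K di
  induction dd with
  | zero => rfl
  | succ dd ih =>
    rw [show Sx K t b (L + v) G (dd + 1)
        = (L + v) * Sx K t b (L + v) G dd
          - (t ^ (b + 2 * (dd : ℤ))) • (Sx K t b (L + v) G dd * (L + v)) from rfl, ih,
      show Sx K t b v G (dd + 1)
        = v * Sx K t b v G dd - (t ^ (b + 2 * (dd : ℤ))) • (Sx K t b v G dd * v) from rfl]
    have hL := L_Sx K t ht b b L v G hv hG dd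
    rw [add_mul, mul_add, smul_add, hL]
    abel

lemma core (di : ℕ) (hdi : 0 < di) (a : ℤ) (N : ℕ) (hN : (N : ℤ) = 1 - a)
    (L v G : R)
    (hv : L * v = (qi K di) ^ (2 : ℤ) • (v * L))
    (hG : L * G = (qi K di) ^ a • (G * L))
    (hser : ∑ r ∈ Finset.range (N + 1),
      ((-1 : Kq K) ^ r * qbin K di N r) • (v ^ (N - r) * G * v ^ r) = 0) :
    ∑ r ∈ Finset.range (N + 1),
      ((-1 : Kq K) ^ r * qbin K di N r) • ((L + v) ^ (N - r) * G * (L + v) ^ r) = 0 := by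
  have key : ∀ x : R,
      ∑ r ∈ Finset.range (N + 1),
        ((-1 : Kq K) ^ r * qbin K di N r) • (x ^ (N - r) * G * x ^ r)
        = Sx K (qi K di) a x G N := by
    intro x
    rw [Sx_eq K di hdi a x G N]
    refine Finset.sum_congr rfl fun r hr => ?_
    rw [Finset.mem_range] at hr
    rw [Cc_of_le K di a (by omega),
      show ((r : ℤ) * (a + (N : ℤ) - 1)) = 0 by rw [hN]; ring, zpow_zero, mul_one]
  rw [key (L + v), Sx_LplusV K di hdi a L v G hv hG, ← key v]
  exact hser

end Core

/-- In `U_q(g)`, for `i ≠ j`,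
`Σ_{r=0}^{1-A_ij} (-1)^r [1-A_ij choose r]_i Ŷ_i^{1-A_ij-r} F_j Ŷ_i^r = 0`
where `Ŷ_i = K_i⁻¹ + F_i(q_i - q_i⁻¹)`. -/
theorem serre_sum_middle_F (K : Type) [Field K] {n : ℕ}
    (A : Matrix (Fin n) (Fin n) ℤ) (d : Fin n → ℕ) (hA : IsSymmetrizableGCM A d)
    (i j : Fin n) (hij : i ≠ j) :
    ∑ r ∈ Finset.range ((1 - A i j).toNat + 1),
      ((-1 : Kq K) ^ r * qbin K (d i) (1 - A i j).toNat r) •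
        ((genKinv K A d i + (qi K (d i) - (qi K (d i))⁻¹) • genF K A d i) ^
            ((1 - A i j).toNat - r) *
          genF K A d j *
          (genKinv K A d i + (qi K (d i) - (qi K (d i))⁻¹) • genF K A d i) ^ r) = 0 := by
  obtain ⟨-, hAii, hAneg, hdpos, -, -⟩ := hA
  have hdi : 0 < d i := hdpos i
  set t : Kq K := qi K (d i) with htq
  have ht : t ≠ 0 := qi_ne_zero K (d i)
  have ha : A i j ≤ 0 := hAneg i j hij
  set N : ℕ := (1 - A i j).toNat with hNdef
  have hN : (N : ℤ) = 1 - A i j := Int.toNat_of_nonneg (by omega)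
  -- the relations in `U_q(g)`
  have hKiK : genKinv K A d i * genK K A d i = 1 := by
    have h := RingQuot.mkAlgHom_rel (Kq K) (CRel.R1b (K := K) (A := A) (d := d) i)
    simpa [genK, genKinv, map_mul, map_one] using h
  have hcomm : ∀ jj : Fin n, genKinv K A d i * genF K A d jj
      = t ^ (A i jj) • (genF K A d jj * genKinv K A d i) := by
    intro jj
    have h4 : genK K A d i * genF K A d jj * genKinv K A d i
        = t ^ (-(A i jj)) • genF K A d jj := by
      have h := RingQuot.mkAlgHom_rel (Kq K) (CRel.R4 (K := K) (A := A) (d := d) i jj)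
      simpa [genK, genF, genKinv, map_mul, map_smul] using h
    have e1 : genF K A d jj * genKinv K A d i
        = t ^ (-(A i jj)) • (genKinv K A d i * genF K A d jj) := by
      calc genF K A d jj * genKinv K A d i
          = genKinv K A d i * (genK K A d i * genF K A d jj * genKinv K A d i) := by
            rw [← mul_assoc, ← mul_assoc, hKiK, one_mul]
        _ = _ := by rw [h4, mul_smul_comm]
    calc genKinv K A d i * genF K A d jj
        = (t ^ (A i jj) * t ^ (-(A i jj))) • (genKinv K A d i * genF K A d jj) := by
          rw [zpow_mul_zpow K ht (show A i jj + -A i jj = 0 by ring), zpow_zero, one_smul]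
      _ = t ^ (A i jj) • (genF K A d jj * genKinv K A d i) := by rw [mul_smul, ← e1]
  -- the quantum Serre relation in `U_q(g)`
  have hserre : ∑ r ∈ Finset.range (N + 1),
      ((-1 : Kq K) ^ r * qbin K (d i) N r) •
        (genF K A d i ^ (N - r) * genF K A d j * genF K A d i ^ r) = 0 := by
    have h := RingQuot.mkAlgHom_rel (Kq K) (CRel.R7 (K := K) (A := A) (d := d) i j hij)
    simpa [hNdef, genF, map_sum, map_smul, map_mul, map_pow, map_zero] using h
  set c : Kq K := t - t⁻¹ with hcdef
  have hv : genKinv K A d i * (c • genF K A d i)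
      = t ^ (2 : ℤ) • ((c • genF K A d i) * genKinv K A d i) := by
    have h2 := hcomm i
    rw [hAii i] at h2
    rw [mul_smul_comm, h2, smul_smul, smul_mul_assoc, smul_smul, mul_comm c (t ^ (2 : ℤ))]
  have hG : genKinv K A d i * genF K A d j
      = t ^ (A i j) • (genF K A d j * genKinv K A d i) := hcomm j
  have hser' : ∑ r ∈ Finset.range (N + 1),
      ((-1 : Kq K) ^ r * qbin K (d i) N r) •
        ((c • genF K A d i) ^ (N - r) * genF K A d j * (c • genF K A d i) ^ r) = 0 := by
    have hterm : ∀ r ∈ Finset.range (N + 1),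
        ((-1 : Kq K) ^ r * qbin K (d i) N r) •
            ((c • genF K A d i) ^ (N - r) * genF K A d j * (c • genF K A d i) ^ r)
          = c ^ N • (((-1 : Kq K) ^ r * qbin K (d i) N r) •
              (genF K A d i ^ (N - r) * genF K A d j * genF K A d i ^ r)) := by
      intro r hr
      rw [Finset.mem_range] at hr
      rw [smul_pow, smul_pow, smul_mul_assoc, smul_mul_assoc, mul_smul_comm,
        smul_smul, smul_smul, smul_smul]
      congr 1
      rw [mul_assoc, ← pow_add, Nat.sub_add_cancel (by omega)]
      ring
    rw [Finset.sum_congr rfl hterm, ← Finset.smul_sum, hserre, smul_zero]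
  exact core K (d i) hdi (A i j) N hN (genKinv K A d i) (c • genF K A d i)
    (genF K A d j) hv hG hser'
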